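/- Under the same hypotheses (κ̲ ≤ κᵢ ≤ κ̄, |bᵢ| ≤ b̄, |Qᵢ| ≤ Q̄), the bilinear form b satisfies the Gårding inequality: b((u₁,u₂),(u₁,u₂)) + K(‖u₁‖²_{L²(Ω)} + ‖u₂‖²_{L²(Ω)}) ≥ α ‖(u₁,u₂)‖_a², where K = b̄/√κ̲ + 2Q̄ and α = 1 − b̄/√κ̲, provided b̄ < √κ̲ so that α > 0. -/

import Mathlib

open MeasureTheory Real
set_option maxHeartbeats 1000000 in

/-- Gårding inequality for the dual-continuum bilinear form `b`:
`b(u,u) + K ‖u‖²_{L²} ≥ α ‖u‖_a²`, with `K = b̄/√κ̲ + 2Q̄`, `α = 1 − b̄/√κ̲ > 0`. -/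
theorem garding_inequality_of_dual_continuum_bilinear_form
    {Ω : Type*} [MeasureSpace Ω]
    (κ₁ κ₂ Q₁ Q₂ : Ω → ℝ)
    (b₁ b₂ : Ω → EuclideanSpace ℝ (Fin 2))
    (u₁ u₂ : Ω → ℝ)
    (gu₁ gu₂ : Ω → EuclideanSpace ℝ (Fin 2))
    (κlow κhigh bbar Qbar : ℝ)
    (hκlow : 0 < κlow)
    (hκ₁ : ∀ x, κlow ≤ κ₁ x ∧ κ₁ x ≤ κhigh)
    (hκ₂ : ∀ x, κlow ≤ κ₂ x ∧ κ₂ x ≤ κhigh)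
    (hb₁ : ∀ x, ‖b₁ x‖ ≤ bbar) (hb₂ : ∀ x, ‖b₂ x‖ ≤ bbar)
    (hQ₁ : ∀ x, |Q₁ x| ≤ Qbar) (hQ₂ : ∀ x, |Q₂ x| ≤ Qbar)
    (hα : bbar < Real.sqrt κlow)
    -- integrability of the relevant quantities
    (hIu₁ : Integrable (fun x => κ₁ x * ‖gu₁ x‖ ^ 2))
    (hIu₂ : Integrable (fun x => κ₂ x * ‖gu₂ x‖ ^ 2))
    (hL₁ : Integrable (fun x => (u₁ x) ^ 2))
    (hL₂ : Integrable (fun x => (u₂ x) ^ 2))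
    (hI3 : Integrable (fun x => (inner ℝ (b₁ x) (gu₁ x - gu₂ x) : ℝ) * u₁ x))
    (hI4 : Integrable (fun x => (inner ℝ (b₂ x) (gu₂ x - gu₁ x) : ℝ) * u₂ x))
    (hI5 : Integrable (fun x => Q₁ x * (u₁ x - u₂ x) * u₁ x))
    (hI6 : Integrable (fun x => Q₂ x * (u₂ x - u₁ x) * u₂ x)) :
    (∫ x, κ₁ x * ‖gu₁ x‖ ^ 2) + (∫ x, κ₂ x * ‖gu₂ x‖ ^ 2)
      + (∫ x, (inner ℝ (b₁ x) (gu₁ x - gu₂ x) : ℝ) * u₁ x)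
      + (∫ x, (inner ℝ (b₂ x) (gu₂ x - gu₁ x) : ℝ) * u₂ x)
      + (∫ x, Q₁ x * (u₁ x - u₂ x) * u₁ x)
      + (∫ x, Q₂ x * (u₂ x - u₁ x) * u₂ x)
      + (bbar / Real.sqrt κlow + 2 * Qbar) * ((∫ x, (u₁ x) ^ 2) + ∫ x, (u₂ x) ^ 2)
    ≥ (1 - bbar / Real.sqrt κlow) *
        ((∫ x, κ₁ x * ‖gu₁ x‖ ^ 2) + ∫ x, κ₂ x * ‖gu₂ x‖ ^ 2) := by
  have hs : 0 < Real.sqrt κlow := Real.sqrt_pos.mpr hκlow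
  set s := Real.sqrt κlow with hsdef
  have hs2 : s ^ 2 = κlow := Real.sq_sqrt hκlow.le
  set c := bbar / s with hcdef
  set F : Ω → ℝ := fun x =>
    ((inner ℝ (b₁ x) (gu₁ x - gu₂ x) : ℝ) * u₁ x
      + (inner ℝ (b₂ x) (gu₂ x - gu₁ x) : ℝ) * u₂ x
      + Q₁ x * (u₁ x - u₂ x) * u₁ x
      + Q₂ x * (u₂ x - u₁ x) * u₂ x
      + (c + 2 * Qbar) * ((u₁ x) ^ 2 + (u₂ x) ^ 2))
      + c * (κ₁ x * ‖gu₁ x‖ ^ 2 + κ₂ x * ‖gu₂ x‖ ^ 2) with hFdef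
  have hFnn : ∀ x, 0 ≤ F x := by
    intro x
    have hbb : 0 ≤ bbar := (norm_nonneg _).trans (hb₁ x)
    have hQb : 0 ≤ Qbar := (abs_nonneg _).trans (hQ₁ x)
    have hc : 0 ≤ c := div_nonneg hbb hs.le
    have hbs : bbar = c * s := by rw [hcdef]; field_simp
    set a1 := ‖gu₁ x‖ with ha1
    set a2 := ‖gu₂ x‖ with ha2
    set v1 := |u₁ x| with hv1
    set v2 := |u₂ x| with hv2
    have ha1n : 0 ≤ a1 := norm_nonneg _
    have ha2n : 0 ≤ a2 := norm_nonneg _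
    have h3' : |(inner ℝ (b₁ x) (gu₁ x - gu₂ x) : ℝ) * u₁ x| ≤ bbar * (a1 + a2) * v1 := by
      rw [abs_mul]
      refine mul_le_mul ?_ le_rfl (abs_nonneg _) (by positivity)
      calc |(inner ℝ (b₁ x) (gu₁ x - gu₂ x) : ℝ)| ≤ ‖b₁ x‖ * ‖gu₁ x - gu₂ x‖ :=
            abs_real_inner_le_norm _ _
        _ ≤ bbar * (a1 + a2) :=
            mul_le_mul (hb₁ x) (norm_sub_le _ _) (norm_nonneg _) hbb
    have h4' : |(inner ℝ (b₂ x) (gu₂ x - gu₁ x) : ℝ) * u₂ x| ≤ bbar * (a2 + a1) * v2 := by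
      rw [abs_mul]
      refine mul_le_mul ?_ le_rfl (abs_nonneg _) (by positivity)
      calc |(inner ℝ (b₂ x) (gu₂ x - gu₁ x) : ℝ)| ≤ ‖b₂ x‖ * ‖gu₂ x - gu₁ x‖ :=
            abs_real_inner_le_norm _ _
        _ ≤ bbar * (a2 + a1) :=
            mul_le_mul (hb₂ x) (norm_sub_le _ _) (norm_nonneg _) hbb
    have h5' : |Q₁ x * (u₁ x - u₂ x) * u₁ x| ≤ Qbar * (v1 + v2) * v1 := by
      rw [abs_mul, abs_mul]
      refine mul_le_mul ?_ le_rfl (abs_nonneg _) (by positivity)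
      exact mul_le_mul (hQ₁ x) (abs_sub _ _) (abs_nonneg _) hQb
    have h6' : |Q₂ x * (u₂ x - u₁ x) * u₂ x| ≤ Qbar * (v2 + v1) * v2 := by
      rw [abs_mul, abs_mul]
      refine mul_le_mul ?_ le_rfl (abs_nonneg _) (by positivity)
      exact mul_le_mul (hQ₂ x) (abs_sub _ _) (abs_nonneg _) hQb
    have h3 := (abs_le.mp h3').1
    have h4 := (abs_le.mp h4').1
    have h5 := (abs_le.mp h5').1
    have h6 := (abs_le.mp h6').1
    have key : bbar * (a1 + a2) * v1 + bbar * (a2 + a1) * v2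
        ≤ c * (s ^ 2 * a1 ^ 2 + s ^ 2 * a2 ^ 2 + v1 ^ 2 + v2 ^ 2) := by
      rw [hbs]
      nlinarith [mul_nonneg hc (sq_nonneg (s * a1 - v1)),
        mul_nonneg hc (sq_nonneg (s * a1 - v2)),
        mul_nonneg hc (sq_nonneg (s * a2 - v1)),
        mul_nonneg hc (sq_nonneg (s * a2 - v2))]
    have keyQ : Qbar * (v1 + v2) * v1 + Qbar * (v2 + v1) * v2
        ≤ 2 * Qbar * (v1 ^ 2 + v2 ^ 2) := by
      nlinarith [mul_nonneg hQb (sq_nonneg (v1 - v2))]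
    have hAB : c * (s ^ 2 * a1 ^ 2 + s ^ 2 * a2 ^ 2)
        ≤ c * (κ₁ x * a1 ^ 2 + κ₂ x * a2 ^ 2) := by
      refine mul_le_mul_of_nonneg_left (add_le_add ?_ ?_) hc <;> rw [hs2]
      exacts [mul_le_mul_of_nonneg_right (hκ₁ x).1 (sq_nonneg _),
        mul_le_mul_of_nonneg_right (hκ₂ x).1 (sq_nonneg _)]
    have hu1 : (u₁ x) ^ 2 = v1 ^ 2 := (sq_abs _).symm
    have hu2 : (u₂ x) ^ 2 = v2 ^ 2 := (sq_abs _).symm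
    simp only [hFdef]
    rw [hu1, hu2]
    linarith
  have hFint : 0 ≤ ∫ x, F x := integral_nonneg hFnn
  have hsplit : (∫ x, F x)
      = (∫ x, (inner ℝ (b₁ x) (gu₁ x - gu₂ x) : ℝ) * u₁ x)
        + (∫ x, (inner ℝ (b₂ x) (gu₂ x - gu₁ x) : ℝ) * u₂ x)
        + (∫ x, Q₁ x * (u₁ x - u₂ x) * u₁ x)
        + (∫ x, Q₂ x * (u₂ x - u₁ x) * u₂ x)
        + (c + 2 * Qbar) * ((∫ x, (u₁ x) ^ 2) + ∫ x, (u₂ x) ^ 2)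
        + c * ((∫ x, κ₁ x * ‖gu₁ x‖ ^ 2) + ∫ x, κ₂ x * ‖gu₂ x‖ ^ 2) := by
    have J34 : Integrable (fun x => (inner ℝ (b₁ x) (gu₁ x - gu₂ x) : ℝ) * u₁ x
        + (inner ℝ (b₂ x) (gu₂ x - gu₁ x) : ℝ) * u₂ x) := hI3.add hI4
    have J345 : Integrable (fun x => (inner ℝ (b₁ x) (gu₁ x - gu₂ x) : ℝ) * u₁ x
        + (inner ℝ (b₂ x) (gu₂ x - gu₁ x) : ℝ) * u₂ x
        + Q₁ x * (u₁ x - u₂ x) * u₁ x) := J34.add hI5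
    have J3456 : Integrable (fun x => (inner ℝ (b₁ x) (gu₁ x - gu₂ x) : ℝ) * u₁ x
        + (inner ℝ (b₂ x) (gu₂ x - gu₁ x) : ℝ) * u₂ x
        + Q₁ x * (u₁ x - u₂ x) * u₁ x
        + Q₂ x * (u₂ x - u₁ x) * u₂ x) := J345.add hI6
    have JL : Integrable (fun x => (c + 2 * Qbar) * ((u₁ x) ^ 2 + (u₂ x) ^ 2)) :=
      (hL₁.add hL₂).const_mul _
    have JK : Integrable (fun x => c * (κ₁ x * ‖gu₁ x‖ ^ 2 + κ₂ x * ‖gu₂ x‖ ^ 2)) :=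
      (hIu₁.add hIu₂).const_mul _
    have JJ : Integrable (fun x => (inner ℝ (b₁ x) (gu₁ x - gu₂ x) : ℝ) * u₁ x
        + (inner ℝ (b₂ x) (gu₂ x - gu₁ x) : ℝ) * u₂ x
        + Q₁ x * (u₁ x - u₂ x) * u₁ x
        + Q₂ x * (u₂ x - u₁ x) * u₂ x
        + (c + 2 * Qbar) * ((u₁ x) ^ 2 + (u₂ x) ^ 2)) := J3456.add JL
    simp only [hFdef]
    rw [integral_add JJ JK, integral_add J3456 JL,
      integral_add J345 hI6, integral_add J34 hI5, integral_add hI3 hI4,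
      integral_const_mul, integral_const_mul,
      integral_add hL₁ hL₂, integral_add hIu₁ hIu₂]
  rw [hsplit] at hFint
  linarith
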